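/- Let N be a strictly convex and smooth norm on ℝ^{2n}, and let v be an optimal control for the energy problem (P) with g≠e. Then: (e) for every normal Pontryagin multiplier with associated function a and constant R=N(v(s)), one has a(s)=R∇N(v(s)) for all s∈[0,T], so a(s) is uniquely determined by v(s); and (f) the Pontryagin multiplier λ associated to v (and hence the function a) is unique. -/

import Mathlib

open MeasureTheory Set

noncomputable section

/-- `ℝ^{2n}`, with the Euclidean norm. -/
abbrev V (n : ℕ) := EuclideanSpace ℝ (Fin (2 * n))

/-- The `n`-th Heisenberg group as a set: `ℝ^{2n} × ℝ`. -/
abbrev Heis (n : ℕ) := V n × ℝ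

/-- Euclidean dot product on `ℝ^{2n}`. -/
def dot {n : ℕ} (p z : V n) : ℝ := ∑ i, p i * z i

/-- Index `i` as an element of the first half of `Fin (2n)`. -/
def fstIdx {n : ℕ} (i : Fin n) : Fin (2 * n) := ⟨i.1, by have := i.isLt; omega⟩

/-- Index `n + i` as an element of the second half of `Fin (2n)`. -/
def sndIdx {n : ℕ} (i : Fin n) : Fin (2 * n) := ⟨n + i.1, by have := i.isLt; omega⟩

/-- The symplectic form `⟨z, J_n z'⟩ = ∑ (y_i x'_i - x_i y'_i)` on `ℝ^{2n}`. -/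
def symp {n : ℕ} (z z' : V n) : ℝ :=
  ∑ i : Fin n, (z (sndIdx i) * z' (fstIdx i) - z (fstIdx i) * z' (sndIdx i))

/-- Heisenberg group multiplication. -/
def hmul {n : ℕ} (g g' : Heis n) : Heis n :=
  (g.1 + g'.1, g.2 + g'.2 + 2 * symp g.1 g'.1)

/-- Heisenberg group inverse. -/
def hinv {n : ℕ} (g : Heis n) : Heis n := (-g.1, -g.2)

/-- Heisenberg dilation `δ_λ(z,t) = (λ z, λ² t)`. -/
def dil {n : ℕ} (l : ℝ) (g : Heis n) : Heis n := (l • g.1, l ^ 2 * g.2)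

/-- `N : ℝ^{2n} → ℝ` is a norm. -/
structure IsNorm {n : ℕ} (N : V n → ℝ) : Prop where
  nonneg : ∀ z, 0 ≤ N z
  eq_zero_iff : ∀ z, N z = 0 ↔ z = 0
  smul : ∀ (a : ℝ) (z : V n), N (a • z) = |a| * N z
  triangle : ∀ z z', N (z + z') ≤ N z + N z'

/-- `N` is a strictly convex norm: additivity of the norm forces positive collinearity. -/
def StrictlyConvexNorm {n : ℕ} (N : V n → ℝ) : Prop :=
  ∀ z z' : V n, z ≠ 0 → z' ≠ 0 → N (z + z') = N z + N z' →
    ∃ α : ℝ, 0 < α ∧ z' = α • z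

/-- The subdifferential of `f : ℝ^{2n} → ℝ` at `z`. -/
def subdiff {n : ℕ} (f : V n → ℝ) (z : V n) : Set (V n) :=
  {p | ∀ z', f z + dot p (z' - z) ≤ f z'}

/-- A norm is smooth if its subdifferential is a singleton away from the origin. -/
def SmoothNorm {n : ℕ} (N : V n → ℝ) : Prop :=
  ∀ z : V n, z ≠ 0 → ∃ p : V n, subdiff N z = {p}

/-- The dual norm `N_*(p) = sup { p·z : N(z) = 1 }`. -/
def dualN {n : ℕ} (N : V n → ℝ) (p : V n) : ℝ :=
  sSup ((fun z => dot p z) '' {z | N z = 1})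

/-- `F_N(z) = ½ N(z)²`. -/
def FN {n : ℕ} (N : V n → ℝ) (z : V n) : ℝ := (1 / 2) * (N z) ^ 2

/-- The Legendre transform `f*(p) = sup_z (p·z - f(z))`. -/
def legendre {n : ℕ} (f : V n → ℝ) (p : V n) : ℝ :=
  ⨆ z : V n, (dot p z - f z)

/-- A horizontal (absolutely continuous) curve on `[a,b]`, encoded via an integrable
horizontal velocity `v = γ̇_I` together with the integral form of the horizontality
condition for the last coordinate. -/
structure HorizCurve (n : ℕ) (a b : ℝ) where
  γ : ℝ → Heis n
  v : ℝ → V n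
  intg : IntegrableOn v (Icc a b)
  pos : ∀ s ∈ Icc a b, (γ s).1 = (γ a).1 + ∫ u in a..s, v u
  vert : ∀ s ∈ Icc a b, (γ s).2 = (γ a).2 + ∫ u in a..s, 2 * symp ((γ u).1) (v u)

/-- The sub-Finsler distance associated to the norm `N` on `ℍⁿ`. -/
def dSF (n : ℕ) (N : V n → ℝ) (g g' : Heis n) : ℝ :=
  sInf { L | ∃ (a b : ℝ) (c : HorizCurve n a b), a ≤ b ∧ c.γ a = g ∧ c.γ b = g' ∧
    L = ∫ s in a..b, N (c.v s) }

/-- Horizontal projection of the trajectory of the control `v`,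
solving `γ̇_I = -v`, `γ_I(0) = 0`. -/
def trajI (n : ℕ) (v : ℝ → V n) (s : ℝ) : V n := -∫ u in (0:ℝ)..s, v u

/-- The trajectory of the control `v`: solves `ẋ_i = -v_i`, `ẏ_i = -v_{n+i}`,
`ṫ = -2∑(y_i v_i - x_i v_{n+i})`, starting at the neutral element. -/
def traj (n : ℕ) (v : ℝ → V n) (s : ℝ) : Heis n :=
  (trajI n v s, -∫ u in (0:ℝ)..s, 2 * symp (trajI n v u) (v u))

/-- `v` is an admissible control steering `e` to `g` in time `T`. -/
def Admissible (n : ℕ) (T : ℝ) (g : Heis n) (v : ℝ → V n) : Prop :=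
  IntegrableOn v (Icc 0 T) ∧ traj n v T = g

/-- `v` is optimal for the energy problem (P). -/
def OptimalEnergy (n : ℕ) (N : V n → ℝ) (T : ℝ) (g : Heis n) (v : ℝ → V n) : Prop :=
  Admissible n T g v ∧ ∀ w : ℝ → V n, Admissible n T g w →
    (∫ s in (0:ℝ)..T, FN N (v s)) ≤ ∫ s in (0:ℝ)..T, FN N (w s)

/-- `v` is optimal for the length problem. -/
def OptimalLength (n : ℕ) (N : V n → ℝ) (T : ℝ) (g : Heis n) (v : ℝ → V n) : Prop :=
  Admissible n T g v ∧ ∀ w : ℝ → V n, Admissible n T g w →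
    (∫ s in (0:ℝ)..T, N (v s)) ≤ ∫ s in (0:ℝ)..T, N (w s)

/-- The standard symplectic matrix `J_n` acting on `ℝ^{2n}`:
`(J z)_i = -z_{n+i}`, `(J z)_{n+i} = z_i`. -/
def Jmat (n : ℕ) (z : V n) : V n :=
  (EuclideanSpace.equiv (Fin (2 * n)) ℝ).symm
    (fun j => if h : (j : ℕ) < n then -z ⟨n + (j : ℕ), by have := j.isLt; omega⟩
      else z ⟨(j : ℕ) - n, by have := j.isLt; omega⟩)

/-- The function `a` associated to a multiplier `λ` (with `λ_{2n+1} ≡ k`) and a control `v`: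
`a_i = λ_i + 2k y_i`, `a_{n+i} = λ_{n+i} - 2k x_i`, where `(x,y) = γ_I` is the horizontal
projection of the trajectory of `v`. -/
def afun (n : ℕ) (v : ℝ → V n) (lam : ℝ → V n) (k : ℝ) (s : ℝ) : V n :=
  lam s - (2 * k) • Jmat n (trajI n v s)

/-- A Pontryagin multiplier `(λ₀, λ)` for the control `v` on `[0,T]` for problem (P):
`λ = (λ_I, k)` with `λ_{2n+1} ≡ k` constant, `λ̇_i = -2k v_{n+i}`, `λ̇_{n+i} = 2k v_i`
(in integrated form), nontriviality, the pointwise minimum principle, and constancy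
of the minimized Hamiltonian. -/
structure PMP (n : ℕ) (N : V n → ℝ) (T : ℝ) (v : ℝ → V n) (l0 : ℝ) where
  lam : ℝ → V n
  k : ℝ
  lam_eq : ∀ s ∈ Icc (0:ℝ) T,
    lam s = lam 0 + (2 * k) • ∫ u in (0:ℝ)..s, Jmat n (v u)
  nontriv : ¬(l0 = 0 ∧ k = 0 ∧ lam 0 = 0)
  argmin : ∀ s ∈ Icc (0:ℝ) T, ∀ u : V n,
    l0 * FN N (v s) - dot (afun n v lam k s) (v s) ≤ l0 * FN N u - dot (afun n v lam k s) u
  isConst : ∃ c : ℝ, ∀ s ∈ Icc (0:ℝ) T,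
    l0 * FN N (v s) - dot (afun n v lam k s) (v s) = c

/-- A homogeneous norm on the Heisenberg group `ℍⁿ`. -/
structure IsHomNorm {n : ℕ} (Nh : Heis n → ℝ) : Prop where
  nonneg : ∀ g, 0 ≤ Nh g
  eq_zero_iff : ∀ g, Nh g = 0 ↔ g = ((0 : V n), (0 : ℝ))
  symm : ∀ g, Nh (hinv g) = Nh g
  triangle : ∀ g g', Nh (hmul g g') ≤ Nh g + Nh g'
  homog : ∀ l : ℝ, 0 < l → ∀ g, Nh (dil l g) = l * Nh g

/-- The geodesic linearity property: every infinite geodesic of `(ℍⁿ, d)` is an affine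
line in `ℝ^{2n+1}`. -/
def GLP (n : ℕ) (d : Heis n → Heis n → ℝ) : Prop :=
  ∀ γ : ℝ → Heis n, (∀ s s' : ℝ, d (γ s) (γ s') = |s - s'|) →
    ∃ p u : Heis n, ∀ s : ℝ, γ s = p + s • u

/-- An infinite multiplier for the control `v` on `[0,∞)`. -/
def IsInfMult (n : ℕ) (N : V n → ℝ) (v : ℝ → V n) (lam : ℝ → V n) (k : ℝ) : Prop :=
  ∀ T : ℝ, 0 < T → ∃ m : PMP n N T v 1, m.lam = lam ∧ m.k = k


namespace Stmt15Aux

variable {n : ℕ}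

lemma dot_smul_left (c : ℝ) (a w : V n) : dot (c • a) w = c * dot a w := by
  simp [dot, Finset.mul_sum, mul_assoc]

lemma dot_smul_right (c : ℝ) (a w : V n) : dot a (c • w) = c * dot a w := by
  simp [dot, Finset.mul_sum, mul_left_comm]

lemma dot_neg_right (a w : V n) : dot a (-w) = - dot a w := by
  simp [dot]

lemma dot_zero_right (a : V n) : dot a 0 = 0 := by simp [dot]

lemma dot_sub_right (a u w : V n) : dot a (u - w) = dot a u - dot a w := by
  simp [dot, mul_sub, Finset.sum_sub_distrib]

lemma N_zero {N : V n → ℝ} (hN : IsNorm N) : N 0 = 0 := (hN.eq_zero_iff 0).mpr rfl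

lemma FN_zero {N : V n → ℝ} (hN : IsNorm N) : FN N 0 = 0 := by
  simp [FN, N_zero hN]

lemma FN_smul {N : V n → ℝ} (hN : IsNorm N) (t : ℝ) (u : V n) :
    FN N (t • u) = t ^ 2 * FN N u := by
  simp [FN, hN.smul, mul_pow, sq_abs]; ring

lemma N_pos {N : V n → ℝ} (hN : IsNorm N) {z : V n} (hz : z ≠ 0) : 0 < N z :=
  lt_of_le_of_ne (hN.nonneg z) (fun h0 => hz ((hN.eq_zero_iff z).mp h0.symm))

lemma eq_zero_of_dot_nonpos (a : V n) (h : ∀ w : V n, dot a w ≤ 0) : a = 0 := by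
  have h1 : dot a a = 0 := by
    have h2 := h a
    have h3 := h (-a)
    rw [dot_neg_right] at h3
    linarith
  have h4 : ∀ i ∈ (Finset.univ : Finset (Fin (2 * n))), a i * a i = 0 := by
    refine (Finset.sum_eq_zero_iff_of_nonneg (fun i _ => mul_self_nonneg _)).mp ?_
    simpa [dot] using h1
  ext i
  simpa using mul_self_eq_zero.mp (h4 i (Finset.mem_univ i))

/-- If `0` minimizes `u ↦ F_N(u) - a·u`, then `a = 0`. -/
lemma a_eq_zero {N : V n → ℝ} (hN : IsNorm N) (a : V n)
    (h : ∀ u : V n, 0 ≤ FN N u - dot a u) : a = 0 := by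
  apply eq_zero_of_dot_nonpos
  intro w
  by_contra hlt
  push_neg at hlt
  have hw : w ≠ 0 := by
    rintro rfl; rw [dot_zero_right] at hlt; exact lt_irrefl 0 hlt
  have hNw : 0 < N w := N_pos hN hw
  set t : ℝ := dot a w / (N w) ^ 2 with ht
  have htpos : 0 < t := div_pos hlt (by positivity)
  have h2 := h (t • w)
  rw [FN_smul hN, dot_smul_right, FN] at h2
  have e1 : t * (N w) ^ 2 = dot a w := by
    rw [ht]; field_simp
  have e2 : t ^ 2 * (1 / 2 * (N w) ^ 2) = 1 / 2 * t * dot a w := by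
    rw [← e1]; ring
  rw [e2] at h2
  nlinarith [mul_pos htpos hlt]

/-- If `z ≠ 0` minimizes `u ↦ F_N(u) - a·u` and `∂N(z) = {p}`, then `a = N(z) • p`. -/
lemma a_eq_smul {N : V n → ℝ} (hN : IsNorm N) (a z p : V n) (hz : z ≠ 0)
    (hp : subdiff N z = {p})
    (h : ∀ u : V n, FN N z - dot a z ≤ FN N u - dot a u) : a = N z • p := by
  set R := N z with hR
  have hRpos : 0 < R := N_pos hN hz
  have hR2 : (0:ℝ) < R ^ 2 := by positivity
  -- Step 1 : dot a z = R ^ 2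
  have hd : dot a z = R ^ 2 := by
    set t : ℝ := dot a z / R ^ 2 with ht
    have h1 := h (t • z)
    rw [FN_smul hN, dot_smul_right, FN, ← hR] at h1
    have e1 : t * R ^ 2 = dot a z := by rw [ht]; field_simp
    have e2 : t ^ 2 * (1 / 2 * R ^ 2) = 1 / 2 * t * dot a z := by rw [← e1]; ring
    rw [e2] at h1
    have h3 := mul_le_mul_of_nonneg_right h1 hR2.le
    have h4 : t * dot a z * R ^ 2 = dot a z ^ 2 := by
      rw [mul_comm t (dot a z), mul_assoc, e1]; ring
    nlinarith [sq_nonneg (R ^ 2 - dot a z)]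
  -- Step 2 : ∀ u, dot a u ≤ R * N u
  have hdu : ∀ u : V n, dot a u ≤ R * N u := by
    intro u
    by_cases hu : u = 0
    · simp [hu, dot_zero_right, N_zero hN]
    · have hNu : 0 < N u := N_pos hN hu
      set t : ℝ := R / N u with ht
      have h1 := h (t • u)
      rw [FN_smul hN, dot_smul_right, FN, FN, ← hR, hd] at h1
      have e1 : t * N u = R := by rw [ht]; field_simp
      have e2 : t ^ 2 * (1 / 2 * N u ^ 2) = 1 / 2 * R ^ 2 := by rw [← e1]; ring
      rw [e2] at h1
      have h2 : t * dot a u ≤ R ^ 2 := by linarith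
      have h4 := mul_le_mul_of_nonneg_right h2 hNu.le
      have h5 : R * dot a u = t * dot a u * N u := by rw [← e1]; ring
      have h6 : R * dot a u ≤ R * (R * N u) := by rw [h5]; nlinarith
      exact (mul_le_mul_iff_right₀ hRpos).mp h6
  -- Step 3 : (1/R) • a ∈ subdiff N z
  have hmem : (1 / R) • a ∈ subdiff N z := by
    intro u
    rw [dot_smul_left, dot_sub_right, hd]
    have h2 : dot a u / R ≤ N u := by
      rw [div_le_iff₀ hRpos]
      nlinarith [hdu u]
    have e3 : (1 / R) * (dot a u - R ^ 2) = dot a u / R - R := by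
      field_simp
    rw [e3, ← hR]
    linarith
  rw [hp, Set.mem_singleton_iff] at hmem
  have e4 : a = R • ((1 / R) • a) := by
    rw [smul_smul, mul_one_div, div_self (ne_of_gt hRpos), one_smul]
  rw [e4, hmem]

lemma Jmat_apply (z : V n) (j : Fin (2 * n)) :
    Jmat n z j = if h : (j : ℕ) < n then -z ⟨n + (j : ℕ), by have := j.isLt; omega⟩
      else z ⟨(j : ℕ) - n, by have := j.isLt; omega⟩ := rfl

/-- `Jmat` as a continuous linear map. -/
def JL (n : ℕ) : V n →L[ℝ] V n :=
  LinearMap.toContinuousLinearMap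
    { toFun := Jmat n
      map_add' := by
        intro x y
        ext j
        simp only [Jmat_apply, PiLp.add_apply]
        split <;> ring
      map_smul' := by
        intro c x
        ext j
        simp only [Jmat_apply, PiLp.smul_apply, smul_eq_mul, RingHom.id_apply]
        split <;> ring }

lemma JL_apply (z : V n) : JL n z = Jmat n z := rfl

lemma Jmat_zero : Jmat n (0 : V n) = 0 := by
  have := (JL n).map_zero
  rwa [JL_apply] at this

lemma Jmat_neg (z : V n) : Jmat n (-z) = -Jmat n z := by
  have := (JL n).map_neg z
  rwa [JL_apply, JL_apply] at this

lemma Jmat_Jmat (z : V n) : Jmat n (Jmat n z) = -z := by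
  ext j
  rcases lt_or_ge (j : ℕ) n with h | h
  · rw [Jmat_apply, dif_pos h, Jmat_apply, dif_neg (by simp), PiLp.neg_apply, neg_inj]
    refine congrArg (WithLp.ofLp z) ?_
    apply Fin.ext
    simp
  · rw [Jmat_apply, dif_neg (by omega), Jmat_apply,
      dif_pos (show ((⟨(j:ℕ) - n, by have := j.isLt; omega⟩ : Fin (2*n)) : ℕ) < n by
        simp; have := j.isLt; omega),
      PiLp.neg_apply, neg_inj]
    refine congrArg (WithLp.ofLp z) ?_
    apply Fin.ext
    simp
    omega

lemma symp_zero_left (z : V n) : symp (0 : V n) z = 0 := by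
  simp [symp]

lemma trajI_zero (v : ℝ → V n) : trajI n v 0 = 0 := by
  simp [trajI]

end Stmt15Aux

open Stmt15Aux in

/-- If `N` is strictly convex and smooth and `v` is an optimal control
for the energy problem with `g ≠ e`, then (e) for every normal multiplier the associated
function satisfies `a(s) = N(v(s))·∇N(v(s))`, so `a(s)` is determined by `v(s)`; and
(f) the multiplier (hence `a`) is unique. -/
theorem stmt15 (n : ℕ) (N : V n → ℝ) (hN : IsNorm N) (hsc : StrictlyConvexNorm N)
    (hsm : SmoothNorm N) (T : ℝ) (hT : 0 < T) (g : Heis n)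
    (hg : g ≠ ((0 : V n), (0 : ℝ))) (v : ℝ → V n)
    (hopt : OptimalEnergy n N T g v) :
    (∀ m : PMP n N T v 1, ∀ s ∈ Icc (0:ℝ) T, ∀ p : V n,
        subdiff N (v s) = {p} → afun n v m.lam m.k s = N (v s) • p)
    ∧ (∀ m m' : PMP n N T v 1,
        m.k = m'.k ∧ ∀ s ∈ Icc (0:ℝ) T, m.lam s = m'.lam s) := by
  obtain ⟨⟨hint, htraj⟩, -⟩ := hopt
  -- Part (e)
  have parte : ∀ m : PMP n N T v 1, ∀ s ∈ Icc (0:ℝ) T, ∀ p : V n,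
      subdiff N (v s) = {p} → afun n v m.lam m.k s = N (v s) • p := by
    intro m s hs p hp
    have harg := m.argmin s hs
    simp only [one_mul] at harg
    by_cases hz : v s = 0
    · have h0 : afun n v m.lam m.k s = 0 := by
        apply a_eq_zero hN
        intro u
        have := harg u
        rw [hz, FN_zero hN, dot_zero_right] at this
        linarith
      rw [h0, hz, N_zero hN, zero_smul]
    · exact a_eq_smul hN _ _ _ hz hp harg
  refine ⟨parte, ?_⟩
  -- the associated function `a` is pointwise determined by `v`
  have afun_eq : ∀ m m' : PMP n N T v 1, ∀ s ∈ Icc (0:ℝ) T,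
      afun n v m.lam m.k s = afun n v m'.lam m'.k s := by
    intro m m' s hs
    by_cases hz : v s = 0
    · have h0 : ∀ mm : PMP n N T v 1, afun n v mm.lam mm.k s = 0 := by
        intro mm
        apply a_eq_zero hN
        intro u
        have := mm.argmin s hs u
        simp only [one_mul] at this
        rw [hz, FN_zero hN, dot_zero_right] at this
        linarith
      rw [h0 m, h0 m']
    · obtain ⟨p, hp⟩ := hsm (v s) hz
      rw [parte m s hs p hp, parte m' s hs p hp]
  intro m m'
  have h0mem : (0:ℝ) ∈ Icc (0:ℝ) T := ⟨le_rfl, hT.le⟩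
  -- `λ(0)` agrees
  have hlam0 : m.lam 0 = m'.lam 0 := by
    have := afun_eq m m' 0 h0mem
    simpa [afun, trajI_zero, Jmat_zero] using this
  -- closed formula for `afun`
  have hform : ∀ mm : PMP n N T v 1, ∀ s ∈ Icc (0:ℝ) T,
      afun n v mm.lam mm.k s = mm.lam 0 - (4 * mm.k) • Jmat n (trajI n v s) := by
    intro mm s hs
    have hvint : IntervalIntegrable v MeasureTheory.volume 0 s := by
      rw [intervalIntegrable_iff_integrableOn_Ioc_of_le hs.1]
      exact hint.mono_set (Set.Ioc_subset_Icc_self.trans (Set.Icc_subset_Icc le_rfl hs.2))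
    have hJ : (∫ u in (0:ℝ)..s, Jmat n (v u)) = Jmat n (∫ u in (0:ℝ)..s, v u) := by
      have := (JL n).intervalIntegral_comp_comm hvint
      simpa [JL_apply] using this
    have hJt : Jmat n (∫ u in (0:ℝ)..s, v u) = -(Jmat n (trajI n v s)) := by
      rw [trajI, Jmat_neg, neg_neg]
    rw [afun, mm.lam_eq s hs, hJ, hJt]
    module
  -- there is a time where the horizontal trajectory is nonzero
  have hex : ∃ s ∈ Icc (0:ℝ) T, trajI n v s ≠ 0 := by
    by_contra hcon
    push_neg at hcon
    apply hg
    rw [← htraj]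
    have h1 : trajI n v T = 0 := hcon T ⟨hT.le, le_rfl⟩
    have h2 : (∫ u in (0:ℝ)..T, 2 * symp (trajI n v u) (v u)) = 0 := by
      rw [intervalIntegral.integral_congr (g := fun _ => (0:ℝ))]
      · simp
      · intro u hu
        rw [Set.uIcc_of_le hT.le] at hu
        show 2 * symp (trajI n v u) (v u) = 0
        rw [hcon u hu, symp_zero_left]
        ring
    show (trajI n v T, -∫ u in (0:ℝ)..T, 2 * symp (trajI n v u) (v u))
        = ((0 : V n), (0 : ℝ))
    rw [h1, h2]
    norm_num
  obtain ⟨s₀, hs₀mem, hs₀⟩ := hex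
  have hJs₀ : Jmat n (trajI n v s₀) ≠ 0 := by
    intro hJ0
    apply hs₀
    have h5 := Jmat_Jmat (n := n) (trajI n v s₀)
    rw [hJ0, Jmat_zero] at h5
    simpa using h5.symm
  have hk : m.k = m'.k := by
    have h1 := afun_eq m m' s₀ hs₀mem
    rw [hform m s₀ hs₀mem, hform m' s₀ hs₀mem, hlam0] at h1
    have h2 : ((4 * m.k) - (4 * m'.k)) • Jmat n (trajI n v s₀) = 0 := by
      have h3 := sub_eq_zero.mpr h1
      rw [sub_sub_sub_cancel_left] at h3
      rw [sub_smul]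
      linear_combination (norm := module) -h3
    rcases smul_eq_zero.mp h2 with h3 | h3
    · linarith [h3]
    · exact absurd h3 hJs₀
  refine ⟨hk, ?_⟩
  intro s hs
  rw [m.lam_eq s hs, m'.lam_eq s hs, hlam0, hk]
end
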